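/- arXiv:2402.03709 — 2 statements merged into one kernel-verified Lean document; each statement's English description precedes it below -/
import Mathlib

section
/- Let k₁, k₂ ∈ ℝ, γ₁ > 0, Θ₁ ∈ ℝ, and let e₁, e₂, e₃, γ : ℝ → ℝ² and Θ̂₁ : ℝ → ℝ be differentiable functions such that, for all t: the derivative of V₂ := (1/2)‖e₁‖² + (1/2)‖e₂‖² satisfies V₂'(t) = −k₁‖e₁(t)‖² − k₂‖e₂(t)‖² + ⟨e₂(t), e₃(t) + (Θ₁ − Θ̂₁(t)) γ(t)⟩, and the adaptation law Θ̂₁'(t) = γ₁ ⟨γ(t), e₂(t)⟩ holds. Then the augmented function 𝒱₂(t) := V₂(t) + (1/(2γ₁))(Θ₁ − Θ̂₁(t))² is differentiable with 𝒱₂'(t) = −k₁‖e₁(t)‖² − k₂‖e₂(t)‖² + ⟨e₂(t), e₃(t)⟩ for all t. -/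
open Real RealInnerProductSpace

/-- `Θ₁`-adaptation step: if `V₂' = −k₁‖e₁‖² − k₂‖e₂‖² + ⟨e₂, e₃ + (Θ₁ − Θ̂₁) γ⟩` and
`Θ̂₁' = γ₁ ⟨γ, e₂⟩`, then `𝒱₂ := V₂ + (1/(2γ₁))(Θ₁ − Θ̂₁)²` is differentiable with
`𝒱₂' = −k₁‖e₁‖² − k₂‖e₂‖² + ⟨e₂, e₃⟩`. -/
theorem stmt_9 (k₁ k₂ γ₁ Θ₁ : ℝ) (hγ₁ : 0 < γ₁)
    (e₁ e₂ e₃ γ : ℝ → EuclideanSpace ℝ (Fin 2))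
    (Θhat₁ : ℝ → ℝ)
    (he₁ : Differentiable ℝ e₁) (he₂ : Differentiable ℝ e₂)
    (he₃ : Differentiable ℝ e₃) (hγ : Differentiable ℝ γ)
    (hΘhat₁ : Differentiable ℝ Θhat₁)
    (V₂ : ℝ → ℝ)
    (hV₂ : ∀ t, V₂ t = (1 / 2) * ‖e₁ t‖ ^ 2 + (1 / 2) * ‖e₂ t‖ ^ 2)
    (hV₂' : ∀ t, deriv V₂ t = -k₁ * ‖e₁ t‖ ^ 2 - k₂ * ‖e₂ t‖ ^ 2 +
      ⟪e₂ t, e₃ t + (Θ₁ - Θhat₁ t) • γ t⟫)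
    (hadapt : ∀ t, deriv Θhat₁ t = γ₁ * ⟪γ t, e₂ t⟫)
    (𝒱₂ : ℝ → ℝ)
    (h𝒱₂ : ∀ t, 𝒱₂ t = V₂ t + (1 / (2 * γ₁)) * (Θ₁ - Θhat₁ t) ^ 2) :
    Differentiable ℝ 𝒱₂ ∧
    ∀ t : ℝ, deriv 𝒱₂ t = -k₁ * ‖e₁ t‖ ^ 2 - k₂ * ‖e₂ t‖ ^ 2 + ⟪e₂ t, e₃ t⟫ := by
  have hVdiff : Differentiable ℝ V₂ := by
    have : Differentiable ℝ (fun t => (1 / 2 : ℝ) * ‖e₁ t‖ ^ 2 + (1 / 2) * ‖e₂ t‖ ^ 2) := by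
      have h1 : Differentiable ℝ (fun t => ‖e₁ t‖ ^ 2) := by
        have h := he₁.inner ℝ he₁
        simp only [real_inner_self_eq_norm_sq] at h
        exact h
      have h2 : Differentiable ℝ (fun t => ‖e₂ t‖ ^ 2) := by
        have h := he₂.inner ℝ he₂
        simp only [real_inner_self_eq_norm_sq] at h
        exact h
      exact (h1.const_mul _).add (h2.const_mul _)
    have hfun : V₂ = fun t => (1 / 2 : ℝ) * ‖e₁ t‖ ^ 2 + (1 / 2) * ‖e₂ t‖ ^ 2 :=
      funext hV₂
    rw [hfun]; exact this
  have hWdiff : Differentiable ℝ (fun t => (1 / (2 * γ₁)) * (Θ₁ - Θhat₁ t) ^ 2) :=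
    (((differentiable_const Θ₁).sub hΘhat₁).pow 2).const_mul _
  have h𝒱fun : 𝒱₂ = fun t => V₂ t + (1 / (2 * γ₁)) * (Θ₁ - Θhat₁ t) ^ 2 := funext h𝒱₂
  constructor
  · rw [h𝒱fun]; exact hVdiff.add hWdiff
  · intro t
    have hd : deriv 𝒱₂ t = deriv V₂ t +
        (1 / (2 * γ₁)) * (2 * (Θ₁ - Θhat₁ t) * (-(deriv Θhat₁ t))) := by
      rw [h𝒱fun]
      rw [deriv_fun_add (hVdiff t) (hWdiff t)]
      congr 1
      rw [deriv_const_mul (d := fun t => (Θ₁ - Θhat₁ t) ^ 2) _ ((((differentiable_const Θ₁).sub hΘhat₁).pow 2) t)]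
      congr 1
      have : deriv (fun t => (Θ₁ - Θhat₁ t) ^ 2) t
          = 2 * (Θ₁ - Θhat₁ t) * deriv (fun t => Θ₁ - Θhat₁ t) t := by
        rw [deriv_fun_pow (f := fun t => Θ₁ - Θhat₁ t) (((differentiable_const Θ₁).sub hΘhat₁) t) 2]
        ring
      rw [this, deriv_const_sub]
    rw [hd, hV₂' t, hadapt t]
    rw [inner_add_right, real_inner_smul_right, real_inner_comm (e₂ t) (γ t)]
    field_simp
    ring
end

section
/- Let k₁, k₂, k₃, k₄ ∈ ℝ, γ₃ > 0, γ₄ > 0, Θ₁, Θ₂ ∈ ℝ, and let e₁, e₂, e₃, e₄, γ, h : ℝ → ℝ², c : ℝ → ℝ, and φ̂₁, Θ̂₂ : ℝ → ℝ be differentiable functions such that, for all t: the derivative of V₄ satisfies V₄'(t) = −k₁‖e₁(t)‖² − k₂‖e₂(t)‖² − k₃‖e₃(t)‖² − k₄‖e₄(t)‖² − c(t)⟨e₄(t), γ(t)⟩(φ̂₁(t) − Θ₁) − ⟨e₄(t), h(t)⟩(Θ̂₂(t) − Θ₂), and the adaptation laws φ̂₁'(t) = γ₃ c(t) ⟨γ(t),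 e₄(t)⟩ and Θ̂₂'(t) = γ₄ ⟨h(t), e₄(t)⟩ hold. Then 𝒱₄(t) := V₄(t) + (1/(2γ₃))(φ̂₁(t) − Θ₁)² + (1/(2γ₄))(Θ̂₂(t) − Θ₂)² is differentiable with 𝒱₄'(t) = −k₁‖e₁(t)‖² − k₂‖e₂(t)‖² − k₃‖e₃(t)‖² − k₄‖e₄(t)‖² for all t. -/
open Real RealInnerProductSpace

/-- `φ₁`- and `Θ₂`-adaptation step: if
`V₄' = −Σᵢ kᵢ‖eᵢ‖² − c ⟨e₄, γ⟩(φ̂₁ − Θ₁) − ⟨e₄, h⟩(Θ̂₂ − Θ₂)` together with the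
adaptation laws `φ̂₁' = γ₃ c ⟨γ, e₄⟩` and `Θ̂₂' = γ₄ ⟨h, e₄⟩`, then
`𝒱₄ := V₄ + (1/(2γ₃))(φ̂₁ − Θ₁)² + (1/(2γ₄))(Θ̂₂ − Θ₂)²` is differentiable with
`𝒱₄' = −k₁‖e₁‖² − k₂‖e₂‖² − k₃‖e₃‖² − k₄‖e₄‖²`. -/
theorem stmt_12 (k₁ k₂ k₃ k₄ γ₃ γ₄ Θ₁ Θ₂ : ℝ) (hγ₃ : 0 < γ₃) (hγ₄ : 0 < γ₄)
    (e₁ e₂ e₃ e₄ γ h : ℝ → EuclideanSpace ℝ (Fin 2))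
    (c : ℝ → ℝ) (φhat₁ Θhat₂ : ℝ → ℝ)
    (he₁ : Differentiable ℝ e₁) (he₂ : Differentiable ℝ e₂)
    (he₃ : Differentiable ℝ e₃) (he₄ : Differentiable ℝ e₄)
    (hγ : Differentiable ℝ γ) (hh : Differentiable ℝ h)
    (hc : Differentiable ℝ c)
    (hφhat₁ : Differentiable ℝ φhat₁) (hΘhat₂ : Differentiable ℝ Θhat₂)
    (V₄ : ℝ → ℝ) (hV₄diff : Differentiable ℝ V₄)
    (hV₄' : ∀ t, deriv V₄ t =
      -k₁ * ‖e₁ t‖ ^ 2 - k₂ * ‖e₂ t‖ ^ 2 - k₃ * ‖e₃ t‖ ^ 2 - k₄ * ‖e₄ t‖ ^ 2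
        - c t * ⟪e₄ t, γ t⟫ * (φhat₁ t - Θ₁)
        - ⟪e₄ t, h t⟫ * (Θhat₂ t - Θ₂))
    (hadapt₁ : ∀ t, deriv φhat₁ t = γ₃ * c t * ⟪γ t, e₄ t⟫)
    (hadapt₂ : ∀ t, deriv Θhat₂ t = γ₄ * ⟪h t, e₄ t⟫)
    (𝒱₄ : ℝ → ℝ)
    (h𝒱₄ : ∀ t, 𝒱₄ t = V₄ t + (1 / (2 * γ₃)) * (φhat₁ t - Θ₁) ^ 2
      + (1 / (2 * γ₄)) * (Θhat₂ t - Θ₂) ^ 2) :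
    Differentiable ℝ 𝒱₄ ∧
    ∀ t : ℝ, deriv 𝒱₄ t =
      -k₁ * ‖e₁ t‖ ^ 2 - k₂ * ‖e₂ t‖ ^ 2 - k₃ * ‖e₃ t‖ ^ 2 - k₄ * ‖e₄ t‖ ^ 2 := by

  have hfun : 𝒱₄ = fun t => V₄ t + (1 / (2 * γ₃)) * (φhat₁ t - Θ₁) ^ 2
      + (1 / (2 * γ₄)) * (Θhat₂ t - Θ₂) ^ 2 := funext h𝒱₄
  have hdiff : Differentiable ℝ 𝒱₄ := by
    rw [hfun]
    exact (hV₄diff.add (((hφhat₁.sub_const Θ₁).pow 2).const_mul _)).add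
      (((hΘhat₂.sub_const Θ₂).pow 2).const_mul _)
  refine ⟨hdiff, fun t => ?_⟩
  have h1 : HasDerivAt (fun t => (φhat₁ t - Θ₁) ^ 2)
      (2 * (φhat₁ t - Θ₁) * (γ₃ * c t * ⟪γ t, e₄ t⟫)) t := by
    have := (((hφhat₁ t).hasDerivAt.sub_const Θ₁).fun_pow 2)
    simpa [hadapt₁ t, pow_one, mul_comm, mul_left_comm, mul_assoc] using this
  have h2 : HasDerivAt (fun t => (Θhat₂ t - Θ₂) ^ 2)
      (2 * (Θhat₂ t - Θ₂) * (γ₄ * ⟪h t, e₄ t⟫)) t := by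
    have := (((hΘhat₂ t).hasDerivAt.sub_const Θ₂).fun_pow 2)
    simpa [hadapt₂ t, pow_one, mul_comm, mul_left_comm, mul_assoc] using this
  have hd : HasDerivAt 𝒱₄
      (deriv V₄ t + (1 / (2 * γ₃)) * (2 * (φhat₁ t - Θ₁) * (γ₃ * c t * ⟪γ t, e₄ t⟫))
        + (1 / (2 * γ₄)) * (2 * (Θhat₂ t - Θ₂) * (γ₄ * ⟪h t, e₄ t⟫))) t := by
    rw [hfun]
    exact (((hV₄diff t).hasDerivAt).add (h1.const_mul _)).add (h2.const_mul _)
  rw [hd.deriv, hV₄' t, real_inner_comm (γ t) (e₄ t), real_inner_comm (h t) (e₄ t)]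
  field_simp
  ring
end
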